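/- Let G and H be nontrivial connected finite graphs and ℓ ≥ 1. If S is an ℓ-solid-resolving set of the Cartesian product G □ H, then the projection of S onto G is an ℓ-solid-resolving set of G. -/

import Mathlib

open SimpleGraph

variable {V : Type*}

/-- Distance from a vertex to a set of vertices. -/
noncomputable def dSet (G : SimpleGraph V) (s : V) (X : Set V) : ℕ :=
  sInf ((G.dist s) '' X)

/-- `S` is an `ℓ`-solid-resolving set of `G`. -/
def LSolid (G : SimpleGraph V) (S : Set V) (ℓ : ℕ) : Prop :=
  ∀ X Y : Set V, X.Nonempty → Y.Nonempty → X.ncard ≤ ℓ → X ≠ Y →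
    ∃ s ∈ S, dSet G s X ≠ dSet G s Y

/-- `S` is an `{ℓ}`-resolving set of `G`. -/
def LResolving (G : SimpleGraph V) (S : Set V) (ℓ : ℕ) : Prop :=
  ∀ X Y : Set V, X.Nonempty → Y.Nonempty → X.ncard ≤ ℓ → Y.ncard ≤ ℓ → X ≠ Y →
    ∃ s ∈ S, dSet G s X ≠ dSet G s Y

/-- The `ℓ`-solid-metric dimension of `G`. -/
noncomputable def solidDim (G : SimpleGraph V) (ℓ : ℕ) : ℕ :=
  sInf {k | ∃ S : Set V, LSolid G S ℓ ∧ S.ncard = k}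

/-- The `{ℓ}`-metric dimension of `G`. -/
noncomputable def lDim (G : SimpleGraph V) (ℓ : ℕ) : ℕ :=
  sInf {k | ∃ S : Set V, LResolving G S ℓ ∧ S.ncard = k}

section Aux

variable {α β : Type*} {G : SimpleGraph α} {H : SimpleGraph β}

lemma boxProd_walk_dist_le (hG : G.Connected) (hH : H.Connected) :
    ∀ {x y : α × β} (w : (G.boxProd H).Walk x y),
      G.dist x.1 y.1 + H.dist x.2 y.2 ≤ w.length := by
  intro x y w
  induction w with
  | nil => simp
  | @cons u z y h p ih =>
      rw [SimpleGraph.Walk.length_cons]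
      rcases SimpleGraph.boxProd_adj.mp h with ⟨h1, h2⟩ | ⟨h1, h2⟩
      · have hd : G.dist u.1 y.1 ≤ 1 + G.dist z.1 y.1 := by
          calc G.dist u.1 y.1 ≤ G.dist u.1 z.1 + G.dist z.1 y.1 := hG.dist_triangle
            _ ≤ 1 + G.dist z.1 y.1 := by
                have : G.dist u.1 z.1 = 1 := SimpleGraph.dist_eq_one_iff_adj.mpr h1
                omega
        rw [h2]
        omega
      · have hd : H.dist u.2 y.2 ≤ 1 + H.dist z.2 y.2 := by
          calc H.dist u.2 y.2 ≤ H.dist u.2 z.2 + H.dist z.2 y.2 := hH.dist_triangle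
            _ ≤ 1 + H.dist z.2 y.2 := by
                have : H.dist u.2 z.2 = 1 := SimpleGraph.dist_eq_one_iff_adj.mpr h1
                omega
        rw [h2]
        omega

lemma boxProd_dist (hG : G.Connected) (hH : H.Connected) (x y : α × β) :
    (G.boxProd H).dist x y = G.dist x.1 y.1 + H.dist x.2 y.2 := by
  apply le_antisymm
  · obtain ⟨p, hp⟩ := hG.exists_walk_length_eq_dist x.1 y.1
    obtain ⟨q, hq⟩ := hH.exists_walk_length_eq_dist x.2 y.2
    have h1 := SimpleGraph.dist_le
      (((p.boxProdLeft H x.2).append (q.boxProdRight G y.1)).copy Prod.mk.eta Prod.mk.eta)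
    rw [SimpleGraph.Walk.length_copy, SimpleGraph.Walk.length_append] at h1
    have e1 : (p.boxProdLeft H x.2).length = p.length := SimpleGraph.Walk.length_map _ _
    have e2 : (q.boxProdRight G y.1).length = q.length := SimpleGraph.Walk.length_map _ _
    rw [e1, e2, hp, hq] at h1
    exact h1
  · obtain ⟨w, hw⟩ := ((hG.boxProd hH) x y).exists_walk_length_eq_dist
    rw [← hw]
    exact boxProd_walk_dist_le hG hH w

lemma sInf_image_add (s : Set ℕ) (hs : s.Nonempty) (c : ℕ) :
    sInf ((· + c) '' s) = sInf s + c := by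
  apply le_antisymm
  · exact Nat.sInf_le ⟨sInf s, Nat.sInf_mem hs, rfl⟩
  · obtain ⟨n, hn, heq⟩ := Nat.sInf_mem (hs.image (· + c))
    rw [← heq]
    exact Nat.add_le_add_right (Nat.sInf_le hn) c

end Aux

theorem stmt_10 {W : Type*} [Fintype V] [Fintype W] [Nontrivial V] [Nontrivial W]
    (G : SimpleGraph V) (H : SimpleGraph W) (hG : G.Connected) (hH : H.Connected)
    (ℓ : ℕ) (hℓ : 1 ≤ ℓ) (S : Set (V × W))
    (hS : LSolid (G.boxProd H) S ℓ) :
    LSolid G (Prod.fst '' S) ℓ := by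
  intro X Y hX hY hXcard hXY
  obtain ⟨w⟩ : Nonempty W := inferInstance
  set X' : Set (V × W) := X ×ˢ {w}
  set Y' : Set (V × W) := Y ×ˢ {w}
  have hX' : X'.Nonempty := hX.prod (Set.singleton_nonempty w)
  have hY' : Y'.Nonempty := hY.prod (Set.singleton_nonempty w)
  have hX'card : X'.ncard ≤ ℓ := by
    have : X'.ncard = X.ncard := by
      have : X' = (fun v => (v, w)) '' X := by
        ext ⟨a, b⟩
        simp [X', Set.mem_prod, eq_comm, and_comm]
      rw [this]
      exact Set.ncard_image_of_injective X (fun a b h => (Prod.mk.injEq _ _ _ _).mp h |>.1)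
    omega
  have hne : X' ≠ Y' := by
    intro h
    apply hXY
    ext v
    constructor
    · intro hv
      have : (v, w) ∈ Y' := h ▸ (Set.mk_mem_prod hv rfl)
      exact this.1
    · intro hv
      have : (v, w) ∈ X' := h ▸ (Set.mk_mem_prod hv rfl)
      exact this.1
  obtain ⟨⟨a, b⟩, hsS, hsd⟩ := hS X' Y' hX' hY' hX'card hne
  refine ⟨a, ⟨(a, b), hsS, rfl⟩, ?_⟩
  intro habs
  apply hsd
  have key : ∀ Z : Set V, Z.Nonempty →
      dSet (G.boxProd H) (a, b) (Z ×ˢ {w}) = dSet G a Z + H.dist b w := by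
    intro Z hZ
    unfold dSet
    have himg : (G.boxProd H).dist (a, b) '' (Z ×ˢ {w}) =
        (· + H.dist b w) '' ((G.dist a) '' Z) := by
      ext n
      constructor
      · rintro ⟨⟨v, w'⟩, ⟨hv, hw'⟩, rfl⟩
        simp only [Set.mem_singleton_iff] at hw'
        refine ⟨G.dist a v, ⟨v, hv, rfl⟩, ?_⟩
        rw [hw', boxProd_dist hG hH (a, b) (v, w)]
      · rintro ⟨m, ⟨v, hv, rfl⟩, rfl⟩
        exact ⟨(v, w), ⟨hv, rfl⟩, boxProd_dist hG hH (a, b) (v, w)⟩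
    rw [himg, sInf_image_add _ (hZ.image _)]
  rw [key X hX, key Y hY, habs]
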